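/- arXiv:0910.0984 — 5 statements merged into one kernel-verified Lean document; each statement's English description precedes it below -/
import Mathlib

section
/- There exists an absolute constant c > 0 such that for all k, w ∈ ℝ, all V ≥ 0 and all J ≥ √V, one has |√2·w·sign(k) − [(½(k+w)² + V)^{1/2} − (½(k−w)² + V)^{1/2}]|² ≤ 2·w²·1[|w| > J] + c·J·[(½(k+w)² + V)^{1/2} + (½(k−w)² + V)^{1/2} − 2·(½k² + V)^{1/2}]. -/
private lemma sqrt_add_le'' (a b : ℝ) (ha : 0 ≤ a) (hb : 0 ≤ b) :
    Real.sqrt (a + b) ≤ Real.sqrt a + Real.sqrt b := by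
  have h2 : Real.sqrt (a+b) ≤ Real.sqrt ((Real.sqrt a + Real.sqrt b)^2) := by
    apply Real.sqrt_le_sqrt
    nlinarith [Real.sq_sqrt ha, Real.sq_sqrt hb, Real.sqrt_nonneg a, Real.sqrt_nonneg b,
      mul_nonneg (Real.sqrt_nonneg a) (Real.sqrt_nonneg b)]
  rwa [Real.sqrt_sq (by positivity)] at h2

private lemma lb_aux (x V : ℝ) (hV : 0 ≤ V) :
    |x| ≤ Real.sqrt 2 * Real.sqrt (x^2/2 + V) := by
  rw [← Real.sqrt_mul (by norm_num : (0:ℝ) ≤ 2)]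
  calc |x| = Real.sqrt (x^2) := (Real.sqrt_sq_eq_abs x).symm
    _ ≤ Real.sqrt (2*(x^2/2+V)) := Real.sqrt_le_sqrt (by linarith)

private lemma ub_aux (x V : ℝ) (hV : 0 ≤ V) :
    Real.sqrt 2 * Real.sqrt (x^2/2 + V) ≤ |x| + Real.sqrt 2 * Real.sqrt V := by
  rw [← Real.sqrt_mul (by norm_num : (0:ℝ) ≤ 2), ← Real.sqrt_mul (by norm_num : (0:ℝ) ≤ 2)]
  rw [show 2*(x^2/2+V) = x^2 + 2*V from by ring]
  calc Real.sqrt (x^2+2*V) ≤ Real.sqrt (x^2) + Real.sqrt (2*V) :=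
        sqrt_add_le'' _ _ (sq_nonneg x) (by linarith)
    _ = |x| + Real.sqrt (2*V) := by rw [Real.sqrt_sq_eq_abs]

private lemma D_nonneg (k w V : ℝ) (hV : 0 ≤ V) :
    2 * Real.sqrt (k^2/2+V) ≤ Real.sqrt ((k+w)^2/2+V) + Real.sqrt ((k-w)^2/2+V) := by
  set A := Real.sqrt ((k+w)^2/2+V) with hA
  set B := Real.sqrt ((k-w)^2/2+V) with hB
  set C := Real.sqrt (k^2/2+V) with hC
  have hA0 : 0 ≤ A := Real.sqrt_nonneg _
  have hB0 : 0 ≤ B := Real.sqrt_nonneg _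
  have hC0 : 0 ≤ C := Real.sqrt_nonneg _
  have hA2 : A^2 = (k+w)^2/2+V := Real.sq_sqrt (by positivity)
  have hB2 : B^2 = (k-w)^2/2+V := Real.sq_sqrt (by positivity)
  have hC2 : C^2 = k^2/2+V := Real.sq_sqrt (by positivity)
  have hG2 : 4*(A*B)^2 = (k^2+2*V-w^2)^2 + 8*V*w^2 := by
    linear_combination (4*B^2)*hA2 + (2*(k+w)^2+4*V)*hB2
  have hGx : k^2+2*V-w^2 ≤ 2*(A*B) := by
    nlinarith [hG2, mul_nonneg hA0 hB0, mul_nonneg hV (sq_nonneg w)]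
  nlinarith [hGx, hA2, hB2, hC2, hA0, hB0, hC0, mul_nonneg hA0 hB0]

private lemma algT (k w V s2 A B : ℝ)
    (hk : 0 ≤ k) (hw : 0 ≤ w) (hV : 0 ≤ V)
    (hs2 : s2^2 = 2) (hs2pos : 0 < s2)
    (hA0 : 0 ≤ A) (hB0 : 0 ≤ B)
    (hA2 : A^2 = (k+w)^2/2+V) (hB2 : B^2 = (k-w)^2/2+V)
    (a1 : k+w ≤ s2*A) (b1 : |k-w| ≤ s2*B) :
    (s2*w - (A-B))^2 ≤ 2*w^2 := by
  have hTid : (s2*w-(A-B))*(A+B) = w*(s2*(A+B)-2*k) := by linear_combination hB2 - hA2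
  have hX0 : 0 ≤ s2*(A+B)-2*k := by
    have := le_abs_self (k-w)
    linarith [a1, b1]
  rcases eq_or_lt_of_le (add_nonneg hA0 hB0) with hAB | hABpos
  · have hA' : A = 0 := by linarith
    have hB' : B = 0 := by linarith
    rw [hA', hB']
    nlinarith [hs2, sq_nonneg w]
  · have hBA : B ≤ A := by nlinarith [hA2, hB2, hA0, hB0, mul_nonneg hk hw]
    have hT0 : 0 ≤ s2*w-(A-B) := by nlinarith [hTid, hX0, hABpos, hw]
    have hTle : s2*w-(A-B) ≤ s2*w := by linarith
    nlinarith [hT0, hTle, hs2, sq_nonneg w, hs2pos, hw]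

set_option maxHeartbeats 1000000 in
private lemma alg (k w V J s2 sV A B C : ℝ)
    (hk : 0 ≤ k) (hw : 0 ≤ w) (hV : 0 ≤ V) (hJ : sV ≤ J) (hwJ : w ≤ J)
    (hs2 : s2^2 = 2) (hs2pos : 0 < s2)
    (hsV0 : 0 ≤ sV) (hsV2 : sV^2 = V)
    (hA0 : 0 ≤ A) (hB0 : 0 ≤ B) (hC0 : 0 ≤ C)
    (hA2 : A^2 = (k+w)^2/2+V) (hB2 : B^2 = (k-w)^2/2+V) (hC2 : C^2 = k^2/2+V)
    (a1 : k+w ≤ s2*A) (a2 : s2*A ≤ (k+w)+s2*sV)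
    (b1 : |k-w| ≤ s2*B) (b2 : s2*B ≤ |k-w|+s2*sV)
    (c1 : k ≤ s2*C) (c2 : s2*C ≤ k+s2*sV) :
    (s2*w - (A-B))^2 ≤ 1000*J*(A+B-2*C) := by
  have hJ0 : 0 ≤ J := hsV0.trans hJ
  have hs2le : s2 ≤ 3/2 := by nlinarith only [hs2, hs2pos]
  have hs2ge : 1 ≤ s2 := by nlinarith only [hs2, hs2pos]
  have hPP0 : 0 ≤ A*B := mul_nonneg hA0 hB0
  -- common algebraic facts
  have hTid : (s2*w-(A-B))*(A+B) = w*(s2*(A+B)-2*k) := by linear_combination hB2 - hA2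
  have hG2 : 4*(A*B)^2 = (k^2+2*V-w^2)^2 + 8*V*w^2 := by
    linear_combination (4*B^2)*hA2 + (2*(k+w)^2+4*V)*hB2
  have hGx : k^2+2*V-w^2 ≤ 2*(A*B) := by
    nlinarith only [hG2, hPP0, mul_nonneg hV (sq_nonneg w)]
  have hGmx : -(k^2+2*V-w^2) ≤ 2*(A*B) := by
    nlinarith only [hG2, hPP0, mul_nonneg hV (sq_nonneg w)]
  have hDS : (A+B-2*C)*(A+B+2*C) = 2*(A*B) + w^2-k^2-2*V := by
    linear_combination hA2 + hB2 - 4*hC2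
  have hD0 : 0 ≤ A+B-2*C := by nlinarith only [hDS, hGx, hA0, hB0, hC0]
  have hDR : (A+B-2*C)*(A+B+2*C)*(2*(A*B)+(k^2+2*V-w^2)) = 8*V*w^2 := by
    linear_combination (2*(A*B)+(k^2+2*V-w^2))*hDS + hG2
  have hR0 : 0 ≤ 2*(A*B)+(k^2+2*V-w^2) := by linarith only [hGmx]
  have hRub : 2*(A*B)+(k^2+2*V-w^2) ≤ 4*(A*B) := by linarith only [hGx]
  have hS0 : 0 ≤ A+B+2*C := by linarith only [hA0, hB0, hC0]
  have hSub : A+B+2*C ≤ 2*(A+B) := by linarith only [hD0]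
  rcases le_or_gt w k with hwk | hkw
  · -- Case 1 : w ≤ k
    rw [abs_of_nonneg (by linarith only [hwk] : (0:ℝ) ≤ k-w)] at b1 b2
    rcases eq_or_lt_of_le hV with hV0 | hVpos
    · -- V = 0
      have hsV' : sV = 0 := by nlinarith only [hsV2, hsV0, hV0]
      have hA' : s2*A = k+w := le_antisymm (by rw [hsV'] at a2; linarith only [a2]) a1
      have hB' : s2*B = k-w := le_antisymm (by rw [hsV'] at b2; linarith only [b2]) b1
      have hT : s2*(s2*w - (A-B)) = 0 := by linear_combination w*hs2 - hA' + hB'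
      have hT0 : s2*w - (A-B) = 0 := by
        rcases mul_eq_zero.mp hT with h | h
        · exact absurd h (ne_of_gt hs2pos)
        · exact h
      rw [hT0]
      nlinarith only [mul_nonneg hJ0 hD0]
    · -- V > 0
      have hApos : 0 < A := by nlinarith only [hA2, hA0, sq_nonneg (k+w), hVpos]
      have hBpos : 0 < B := by nlinarith only [hB2, hB0, sq_nonneg (k-w), hVpos]
      have hABpos : 0 < A+B := by linarith only [hApos, hBpos]
      have hX0 : 0 ≤ s2*(A+B)-2*k := by linarith only [a1, b1]
      have hXub : s2*(A+B)-2*k ≤ 2*(s2*sV) := by linarith only [a2, b2]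
      have hidA : (s2*A-(k+w))*(s2*A+(k+w)) = 2*V := by
        linear_combination A^2*hs2 + 2*hA2
      have hidB : (s2*B-(k-w))*(s2*B+(k-w)) = 2*V := by
        linear_combination B^2*hs2 + 2*hB2
      have hEA : (s2*A-(k+w))*(s2*A) ≤ 2*V := by
        nlinarith only [hidA, mul_nonneg (by linarith only [a1] : (0:ℝ) ≤ s2*A-(k+w))
          (by linarith only [hk, hw, hwk] : (0:ℝ) ≤ k+w)]
      have hEB : (s2*B-(k-w))*(s2*B) ≤ 2*V := by
        nlinarith only [hidB, mul_nonneg (by linarith only [b1] : (0:ℝ) ≤ s2*B-(k-w))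
          (by linarith only [hwk] : (0:ℝ) ≤ k-w)]
      have hEG : (s2*(A+B)-2*k)*(A*B) ≤ V*(s2*(A+B)) := by
        have m1 := mul_le_mul_of_nonneg_right hEA
          (mul_nonneg hs2pos.le hB0)
        have m2 := mul_le_mul_of_nonneg_right hEB
          (mul_nonneg hs2pos.le hA0)
        have r1 : (s2*A-(k+w))*(s2*A)*(s2*B) = (s2*A-(k+w))*(2*(A*B)) := by
          linear_combination ((s2*A-(k+w))*(A*B))*hs2
        have r2 : (s2*B-(k-w))*(s2*B)*(s2*A) = (s2*B-(k-w))*(2*(A*B)) := by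
          linear_combination ((s2*B-(k-w))*(A*B))*hs2
        rw [r1] at m1
        rw [r2] at m2
        linarith only [m1, m2]
      have hT2id : (s2*w-(A-B))^2*(A+B)^2 = w^2*(s2*(A+B)-2*k)^2 := by
        linear_combination ((s2*w-(A-B))*(A+B) + w*(s2*(A+B)-2*k))*hTid
      have hT2idP : (s2*w-(A-B))^2*(A+B)^2*(A*B) = w^2*(s2*(A+B)-2*k)^2*(A*B) := by
        rw [hT2id]
      have hchain : (s2*w-(A-B))^2*(A+B)^2*(A*B) ≤ (2*(s2*sV))*(V*(s2*(A+B)))*w^2 := by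
        have m3 := mul_le_mul_of_nonneg_left hEG (mul_nonneg (sq_nonneg w) hX0)
        have m4 := mul_le_mul_of_nonneg_right hXub
          (mul_nonneg (mul_nonneg hV (mul_nonneg hs2pos.le (by linarith only [hApos, hBpos] : (0:ℝ) ≤ A+B))) (sq_nonneg w))
        linarith only [hT2idP, m3, m4]
      have hDlow : V*w^2 ≤ (A+B-2*C)*(A+B)*(A*B) := by
        have n1 := mul_le_mul_of_nonneg_right (mul_le_mul_of_nonneg_left hSub hD0) hR0
        have n2 := mul_le_mul_of_nonneg_left hRub (mul_nonneg hD0 (by linarith only [hApos, hBpos] : (0:ℝ) ≤ 2*(A+B)))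
        linarith only [hDR, n1, n2]
      have hcomb : (s2*w-(A-B))^2*((A+B)^2*(A*B)) ≤ (4*sV*(A+B-2*C))*((A+B)^2*(A*B)) := by
        have m5 := mul_le_mul_of_nonneg_left hDlow
          (mul_nonneg (mul_nonneg (by norm_num : (0:ℝ) ≤ 4) hsV0) (by linarith only [hApos, hBpos] : (0:ℝ) ≤ A+B))
        have e5 : (2*(s2*sV))*(V*(s2*(A+B)))*w^2 = 4*sV*(A+B)*(V*w^2) := by
          linear_combination (2*sV*V*(A+B)*w^2)*hs2
        linarith only [hchain, m5, e5]
      have hPpos : 0 < (A+B)^2*(A*B) :=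
        mul_pos (pow_pos hABpos 2) (mul_pos hApos hBpos)
      have hTD : (s2*w-(A-B))^2 ≤ 4*sV*(A+B-2*C) := le_of_mul_le_mul_right hcomb hPpos
      have hfin1 : sV*(A+B-2*C) ≤ J*(A+B-2*C) := mul_le_mul_of_nonneg_right hJ hD0
      nlinarith only [hTD, hfin1, mul_nonneg hJ0 hD0]
  · -- Case 2 : k < w
    rw [abs_of_nonpos (by linarith only [hkw] : k-w ≤ 0)] at b1 b2
    rcases eq_or_lt_of_le hV with hV0 | hVpos
    · -- V = 0
      have hsV' : sV = 0 := by nlinarith only [hsV2, hsV0, hV0]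
      have hA' : s2*A = k+w := le_antisymm (by rw [hsV'] at a2; linarith only [a2]) a1
      have hB' : s2*B = -(k-w) := le_antisymm (by rw [hsV'] at b2; linarith only [b2]) b1
      have hC' : s2*C = k := le_antisymm (by rw [hsV'] at c2; linarith only [c2]) c1
      have hTT : s2*(s2*w-(A-B)) = 2*(w-k) := by linear_combination w*hs2 - hA' + hB'
      have hD' : s2*(A+B-2*C) = 2*(w-k) := by linear_combination hA' + hB' - 2*hC'
      have hTeqD : s2*w-(A-B) = A+B-2*C :=
        mul_left_cancel₀ (ne_of_gt hs2pos) (by linarith only [hTT, hD'])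
      have hD2J : A+B-2*C ≤ 2*J := by
        have hm := mul_le_mul_of_nonneg_right hs2ge hD0
        rw [one_mul] at hm
        linarith only [hD', hm, hkw, hwJ, hk]
      rw [hTeqD]
      nlinarith only [hD0, hD2J, hJ0]
    · -- V > 0
      have hApos : 0 < A := by nlinarith only [hA2, hA0, sq_nonneg (k+w), hVpos]
      have hBpos : 0 < B := by nlinarith only [hB2, hB0, sq_nonneg (k-w), hVpos]
      have hABpos : 0 < A+B := by linarith only [hApos, hBpos]
      have hX0 : 0 ≤ s2*(A+B)-2*k := by linarith only [a1, b1, hkw]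
      have hT0 : 0 ≤ s2*w-(A-B) := by nlinarith only [hTid, hX0, hABpos, hw]
      have hTub2 : s2*w-(A-B) ≤ s2*w := by
        nlinarith only [hTid, hABpos, mul_nonneg hk hw]
      have hTs : s2*(s2*w-(A-B)) = 2*w - s2*A + s2*B := by linear_combination w*hs2
      have hTub : s2*(s2*w-(A-B)) ≤ 2*(w-k) + s2*sV := by linarith only [a1, b2, hTs]
      have hDlb : 2*(w-k) - 2*(s2*sV) ≤ s2*(A+B-2*C) := by
        have hDexp : s2*(A+B-2*C) = s2*A+s2*B-2*(s2*C) := by ring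
        linarith only [a1, b1, c2, hDexp]
      have hs2sV : s2*sV ≤ (3/2)*sV := mul_le_mul_of_nonneg_right hs2le hsV0
      -- R upper bound
      have hM0 : 0 ≤ 2*V + w^2 - k^2 := by nlinarith only [hkw, hk, hV]
      have hterm : (2*(s2*sV)*w)^2 = 8*V*w^2 := by
        linear_combination (4*sV^2*w^2)*hs2 + (8*w^2)*hsV2
      have hMsq : (2*(A*B))^2 ≤ ((2*V + w^2 - k^2) + 2*(s2*sV)*w)^2 := by
        nlinarith only [hG2, hterm, hM0, mul_nonneg hV (by nlinarith only [hkw, hk] : (0:ℝ) ≤ w^2 - k^2),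
          mul_nonneg (mul_nonneg (mul_nonneg hs2pos.le hsV0) hw) hM0]
      have hRM : 2*(A*B) + (k^2+2*V-w^2) ≤ 4*V + 2*(s2*sV)*w := by
        have h2s : 0 ≤ 2*(s2*sV)*w := by
          have h := mul_nonneg (mul_nonneg hs2pos.le hsV0) hw
          nlinarith only [h]
        have hMge0 : 0 ≤ (2*V + w^2 - k^2) + 2*(s2*sV)*w := by
          linarith only [hM0, h2s, hV]
        have h2AB := le_of_pow_le_pow_left₀ two_ne_zero hMge0 hMsq
        linarith only [h2AB]
      -- S upper bound
      have hSup : s2*(A+B+2*C) ≤ 4*w + 4*(s2*sV) := by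
        have hSexp : s2*(A+B+2*C) = s2*A+s2*B+2*(s2*C) := by ring
        linarith only [a2, b2, c2, hSexp, hkw]
      have hSub2 : A+B+2*C ≤ 2*s2*w + 4*sV := by
        have e6 : s2*(2*s2*w+4*sV) = 4*w + 4*(s2*sV) := by linear_combination 2*w*hs2
        nlinarith only [hSup, e6, hs2pos]
      have hmaster : 8*V*w^2 ≤ (A+B-2*C)*((2*s2*w+4*sV)*(4*V+2*(s2*sV)*w)) := by
        have hq0 : 0 ≤ 2*s2*w+4*sV := by
          nlinarith only [mul_nonneg hs2pos.le hw, hsV0]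
        have n1 := mul_le_mul_of_nonneg_right (mul_le_mul_of_nonneg_left hSub2 hD0) hR0
        have n2 := mul_le_mul_of_nonneg_left hRM (mul_nonneg hD0 hq0)
        linarith only [hDR, n1, n2]
      rcases le_or_gt w sV with hwsV | hsVw
      · -- 2a : w ≤ sV
        have h1 : 2*s2*w+4*sV ≤ 7*sV := by
          have hm := mul_le_mul_of_nonneg_right hs2le hw
          linarith only [hm, hwsV]
        have h2 : 4*V+2*(s2*sV)*w ≤ 7*V := by
          have hm1 : s2*(sV*w) ≤ (3/2)*(sV*w) :=
            mul_le_mul_of_nonneg_right hs2le (mul_nonneg hsV0 hw)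
          have hm2 : sV*w ≤ sV*sV := mul_le_mul_of_nonneg_left hwsV hsV0
          nlinarith only [hm1, hm2, hsV2, mul_nonneg hsV0 hw]
        have hq1 : 0 ≤ 4*V+2*(s2*sV)*w := by
          nlinarith only [mul_nonneg (mul_nonneg hs2pos.le hsV0) hw, hV]
        have hm6 : (2*s2*w+4*sV)*(4*V+2*(s2*sV)*w) ≤ 7*sV*(7*V) :=
          mul_le_mul h1 h2 hq1 (by nlinarith only [hsV0])
        have hmaster2 : 8*V*w^2 ≤ (A+B-2*C)*(49*(sV*V)) := by
          have hmm := mul_le_mul_of_nonneg_left hm6 hD0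
          linarith only [hmaster, hmm]
        have hT2w : (s2*w-(A-B))^2 ≤ 2*w^2 := by
          nlinarith only [hT0, hTub2, hs2, sq_nonneg w, hw, hs2pos]
        have hsVD : sV*(A+B-2*C) ≤ J*(A+B-2*C) := mul_le_mul_of_nonneg_right hJ hD0
        nlinarith only [hT2w, hmaster2, hsVD, hVpos, mul_nonneg hJ0 hD0, hD0]
      · rcases le_or_gt (4*sV) (w-k) with hbig | hsmall
        · -- 2b
          have hT3 : s2*(s2*w-(A-B)) ≤ (19/8)*(w-k) := by
            linarith only [hTub, hs2sV, hbig, hsV0]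
          have hs2T0 : 0 ≤ s2*(s2*w-(A-B)) := mul_nonneg hs2pos.le hT0
          have hTexp : (s2*(s2*w-(A-B)))^2 = 2*(s2*w-(A-B))^2 := by
            linear_combination ((s2*w-(A-B))^2)*hs2
          have hTsq : (s2*w-(A-B))^2 ≤ 3*(w-k)^2 := by
            nlinarith only [hT3, hs2T0, hTexp]
          have hDlb2 : (5/4)*(w-k) ≤ s2*(A+B-2*C) := by
            linarith only [hDlb, hs2sV, hbig]
          have hDlb3 : (5/6)*(w-k) ≤ A+B-2*C := by
            have hm := mul_le_mul_of_nonneg_right hs2le hD0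
            nlinarith only [hDlb2, hm]
          have hwk0 : 0 ≤ w-k := by linarith only [hkw]
          have ma : (w-k)*(w-k) ≤ w*(w-k) :=
            mul_le_mul_of_nonneg_right (by linarith only [hk] : w-k ≤ w) hwk0
          have mb : w*(w-k) ≤ J*(w-k) := mul_le_mul_of_nonneg_right hwJ hwk0
          have mc : J*((5/6)*(w-k)) ≤ J*(A+B-2*C) := mul_le_mul_of_nonneg_left hDlb3 hJ0
          nlinarith only [hTsq, ma, mb, mc, mul_nonneg hJ0 hD0]
        · -- 2c
          have hT4 : s2*(s2*w-(A-B)) ≤ (19/2)*sV := by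
            linarith only [hTub, hs2sV, hsmall]
          have hs2T0 : 0 ≤ s2*(s2*w-(A-B)) := mul_nonneg hs2pos.le hT0
          have hTexp : (s2*(s2*w-(A-B)))^2 = 2*(s2*w-(A-B))^2 := by
            linear_combination ((s2*w-(A-B))^2)*hs2
          have hTsq2 : 2*(s2*w-(A-B))^2 ≤ (361/4)*V := by
            nlinarith only [hT4, hs2T0, hTexp, hsV2, hsV0]
          have h1' : 2*s2*w+4*sV ≤ 7*w := by nlinarith only [hs2le, hw, hsVw, hsV0]
          have h2' : 4*V+2*(s2*sV)*w ≤ 7*(sV*w) := by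
            have hm1 : s2*(sV*w) ≤ (3/2)*(sV*w) :=
              mul_le_mul_of_nonneg_right hs2le (mul_nonneg hsV0 hw)
            have hm2 : sV*sV ≤ sV*w := mul_le_mul_of_nonneg_left hsVw.le hsV0
            nlinarith only [hm1, hm2, hsV2, mul_nonneg hsV0 hw]
          have hq1 : 0 ≤ 4*V+2*(s2*sV)*w := by
            nlinarith only [mul_nonneg (mul_nonneg hs2pos.le hsV0) hw, hV]
          have hm6 : (2*s2*w+4*sV)*(4*V+2*(s2*sV)*w) ≤ 7*w*(7*(sV*w)) :=
            mul_le_mul h1' h2' hq1 (by nlinarith only [hw, hsV0, hsVw])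
          have hmaster2 : 8*V*w^2 ≤ (A+B-2*C)*(49*sV*w^2) := by
            have hmm := mul_le_mul_of_nonneg_left hm6 hD0
            linarith only [hmaster, hmm]
          have hwpos : 0 < w := by linarith only [hsV0, hsVw]
          have h8V : 8*V ≤ 49*sV*(A+B-2*C) := by
            have hw2 : 0 < w^2 := by positivity
            nlinarith only [hmaster2, hw2]
          have hsVD : sV*(A+B-2*C) ≤ J*(A+B-2*C) := mul_le_mul_of_nonneg_right hJ hD0
          nlinarith only [hTsq2, h8V, hsVD, mul_nonneg hJ0 hD0, hD0]

private lemma key (k w V J : ℝ) (hk : 0 ≤ k) (hw : 0 ≤ w) (hV : 0 ≤ V)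
    (hJ : Real.sqrt V ≤ J) (hwJ : w ≤ J) :
    (Real.sqrt 2 * w - (Real.sqrt ((k+w)^2/2+V) - Real.sqrt ((k-w)^2/2+V)))^2
      ≤ 1000 * J * (Real.sqrt ((k+w)^2/2+V) + Real.sqrt ((k-w)^2/2+V)
          - 2*Real.sqrt (k^2/2+V)) := by
  have ha1 := lb_aux (k+w) V hV
  have ha2 := ub_aux (k+w) V hV
  rw [abs_of_nonneg (by linarith : (0:ℝ) ≤ k+w)] at ha1 ha2
  have hc1 := lb_aux k V hV
  have hc2 := ub_aux k V hV
  rw [abs_of_nonneg hk] at hc1 hc2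
  exact alg k w V J (Real.sqrt 2) (Real.sqrt V)
    (Real.sqrt ((k+w)^2/2+V)) (Real.sqrt ((k-w)^2/2+V)) (Real.sqrt (k^2/2+V))
    hk hw hV hJ hwJ
    (Real.sq_sqrt (by norm_num)) (Real.sqrt_pos.mpr (by norm_num))
    (Real.sqrt_nonneg V) (Real.sq_sqrt hV)
    (Real.sqrt_nonneg _) (Real.sqrt_nonneg _) (Real.sqrt_nonneg _)
    (Real.sq_sqrt (by positivity)) (Real.sq_sqrt (by positivity)) (Real.sq_sqrt (by positivity))
    ha1 ha2 (lb_aux (k-w) V hV) (ub_aux (k-w) V hV) hc1 hc2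

private lemma keyT (k w V : ℝ) (hk : 0 ≤ k) (hw : 0 ≤ w) (hV : 0 ≤ V) :
    (Real.sqrt 2 * w - (Real.sqrt ((k+w)^2/2+V) - Real.sqrt ((k-w)^2/2+V)))^2 ≤ 2*w^2 := by
  have ha1 := lb_aux (k+w) V hV
  rw [abs_of_nonneg (by linarith : (0:ℝ) ≤ k+w)] at ha1
  exact algT k w V (Real.sqrt 2) (Real.sqrt ((k+w)^2/2+V)) (Real.sqrt ((k-w)^2/2+V))
    hk hw hV (Real.sq_sqrt (by norm_num)) (Real.sqrt_pos.mpr (by norm_num))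
    (Real.sqrt_nonneg _) (Real.sqrt_nonneg _)
    (Real.sq_sqrt (by positivity)) (Real.sq_sqrt (by positivity))
    ha1 (lb_aux (k-w) V hV)

private lemma main2 (k w V J : ℝ) (hk : 0 ≤ k) (hw : 0 ≤ w) (hV : 0 ≤ V)
    (hJ : Real.sqrt V ≤ J) :
    (Real.sqrt 2 * w - (Real.sqrt ((k+w)^2/2+V) - Real.sqrt ((k-w)^2/2+V)))^2
      ≤ 2*w^2*(if J < |w| then (1:ℝ) else 0)
        + 1000*J*(Real.sqrt ((k+w)^2/2+V) + Real.sqrt ((k-w)^2/2+V)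
            - 2*Real.sqrt (k^2/2+V)) := by
  have hJ0 : 0 ≤ J := (Real.sqrt_nonneg V).trans hJ
  have hD := D_nonneg k w V hV
  by_cases hcase : J < |w|
  · rw [if_pos hcase]
    have hT2 := keyT k w V hk hw hV
    have hpos : 0 ≤ J * (Real.sqrt ((k+w)^2/2+V) + Real.sqrt ((k-w)^2/2+V)
        - 2*Real.sqrt (k^2/2+V)) := mul_nonneg hJ0 (by linarith)
    nlinarith only [hT2, hpos]
  · rw [if_neg hcase]
    have hwJ : w ≤ J := by
      rw [abs_of_nonneg hw] at hcase
      linarith [not_lt.mp hcase]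
    have h := key k w V J hk hw hV hJ hwJ
    linarith [h]

/-- There is an absolute constant `c > 0` comparing the jump of the signed momentum
with the jump of the square root of the energy `½k² + V`. -/
theorem energy_jump_comparison :
    ∃ c : ℝ, 0 < c ∧ ∀ (k w V J : ℝ), 0 ≤ V → Real.sqrt V ≤ J →
      |Real.sqrt 2 * w * Real.sign k -
          (Real.sqrt ((k + w) ^ 2 / 2 + V) - Real.sqrt ((k - w) ^ 2 / 2 + V))| ^ 2
        ≤ 2 * w ^ 2 * (if J < |w| then (1 : ℝ) else 0) +
          c * J * (Real.sqrt ((k + w) ^ 2 / 2 + V) + Real.sqrt ((k - w) ^ 2 / 2 + V)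
            - 2 * Real.sqrt (k ^ 2 / 2 + V)) := by
  refine ⟨1000, by norm_num, ?_⟩
  intro k w V J hV hJ
  have hJ0 : 0 ≤ J := (Real.sqrt_nonneg V).trans hJ
  have hD := D_nonneg k w V hV
  rw [sq_abs]
  rcases lt_trichotomy k 0 with hk | hk | hk
  · rw [Real.sign_of_neg hk]
    rcases le_or_gt 0 w with hw | hw
    · have h := main2 (-k) w V J (by linarith) hw hV hJ
      rw [show ((-k)+w)^2/2+V = (k-w)^2/2+V from by ring,
          show ((-k)-w)^2/2+V = (k+w)^2/2+V from by ring,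
          show ((-k))^2/2+V = k^2/2+V from by ring] at h
      nlinarith only [h]
    · have h := main2 (-k) (-w) V J (by linarith) (by linarith) hV hJ
      rw [show ((-k)+(-w))^2/2+V = (k+w)^2/2+V from by ring,
          show ((-k)-(-w))^2/2+V = (k-w)^2/2+V from by ring,
          show ((-k))^2/2+V = k^2/2+V from by ring,
          abs_neg, neg_sq] at h
      nlinarith only [h]
  · subst hk
    rw [Real.sign_zero, mul_zero]
    rw [show ((0:ℝ)+w)^2/2+V = w^2/2+V from by ring,
        show ((0:ℝ)-w)^2/2+V = w^2/2+V from by ring] at hD ⊢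
    have hLHS : (0 - (Real.sqrt (w^2/2+V) - Real.sqrt (w^2/2+V)))^2 = 0 := by ring
    rw [hLHS]
    have hite : 0 ≤ (if J < |w| then (1:ℝ) else 0) := by split_ifs <;> norm_num
    have ht1 : 0 ≤ 2*w^2*(if J < |w| then (1:ℝ) else 0) :=
      mul_nonneg (mul_nonneg (by norm_num) (sq_nonneg w)) hite
    have ht2 : 0 ≤ 1000*J*(Real.sqrt (w^2/2+V) + Real.sqrt (w^2/2+V)
        - 2*Real.sqrt ((0:ℝ)^2/2+V)) :=
      mul_nonneg (mul_nonneg (by norm_num) hJ0) (by linarith only [hD])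
    linarith only [ht1, ht2]
  · rw [Real.sign_of_pos hk, mul_one]
    rcases le_or_gt 0 w with hw | hw
    · exact main2 k w V J (le_of_lt hk) hw hV hJ
    · have h := main2 k (-w) V J (le_of_lt hk) (by linarith) hV hJ
      rw [show (k+(-w))^2/2+V = (k-w)^2/2+V from by ring,
          show (k-(-w))^2/2+V = (k+w)^2/2+V from by ring,
          abs_neg, neg_sq] at h
      nlinarith only [h]
end

section
/- There exists W > 0 such that for all k, w ∈ ℝ with |w| ≥ W, one has max(|w| − |k|, 0) < √((k+w)² + 1) + √((k−w)² + 1) − 2·√(k² + 1). -/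
private lemma self_le_sqrt_sq_add_one (x : ℝ) : x ≤ Real.sqrt (x ^ 2 + 1) := by
  calc x ≤ |x| := le_abs_self x
    _ = Real.sqrt (x ^ 2) := (Real.sqrt_sq_eq_abs x).symm
    _ ≤ Real.sqrt (x ^ 2 + 1) := Real.sqrt_le_sqrt (by linarith)

/-- For `|w|` large enough (uniformly in `k`), `max(|w| − |k|, 0)` is strictly below the
symmetrized second difference of `f(x) = √(x² + 1)`. -/
theorem linear_lt_second_difference :
    ∃ W : ℝ, 0 < W ∧ ∀ k w : ℝ, W ≤ |w| →
      max (|w| - |k|) 0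
        < Real.sqrt ((k + w) ^ 2 + 1) + Real.sqrt ((k - w) ^ 2 + 1)
            - 2 * Real.sqrt (k ^ 2 + 1) := by
  refine ⟨4, by norm_num, ?_⟩
  intro k w hw
  have hw0 : (0:ℝ) < |w| := by linarith
  rcases le_or_gt |w| |k| with hkw | hkw
  · -- Case A : |w| ≤ |k|, show the second difference is positive
    rw [max_eq_right (by linarith)]
    have hu0 : (0:ℝ) ≤ (k + w) ^ 2 + 1 := by positivity
    have hv0 : (0:ℝ) ≤ (k - w) ^ 2 + 1 := by positivity
    have hm0 : (0:ℝ) ≤ k ^ 2 + 1 := by positivity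
    have hw2 : 0 < w ^ 2 := by nlinarith [sq_abs w]
    have hprod : (k ^ 2 + 1) - w ^ 2
        < Real.sqrt ((k + w) ^ 2 + 1) * Real.sqrt ((k - w) ^ 2 + 1) := by
      rw [← Real.sqrt_mul hu0]
      have h1 : ((k ^ 2 + 1) - w ^ 2) ^ 2 < ((k + w) ^ 2 + 1) * ((k - w) ^ 2 + 1) := by
        nlinarith [sq_nonneg (k * w), sq_nonneg w]
      calc (k ^ 2 + 1) - w ^ 2 ≤ |(k ^ 2 + 1) - w ^ 2| := le_abs_self _
        _ = Real.sqrt (((k ^ 2 + 1) - w ^ 2) ^ 2) := (Real.sqrt_sq_eq_abs _).symm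
        _ < Real.sqrt (((k + w) ^ 2 + 1) * ((k - w) ^ 2 + 1)) :=
            Real.sqrt_lt_sqrt (sq_nonneg _) h1
    have key : (2 * Real.sqrt (k ^ 2 + 1)) ^ 2
        < (Real.sqrt ((k + w) ^ 2 + 1) + Real.sqrt ((k - w) ^ 2 + 1)) ^ 2 := by
      nlinarith [Real.sq_sqrt hu0, Real.sq_sqrt hv0, Real.sq_sqrt hm0, hprod]
    have hlt := lt_of_pow_lt_pow_left₀ 2
      (by positivity : (0:ℝ) ≤ Real.sqrt ((k + w) ^ 2 + 1) + Real.sqrt ((k - w) ^ 2 + 1)) key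
    linarith
  · -- Case |k| < |w|
    rw [max_eq_left (by linarith)]
    have hsym : Real.sqrt ((k + w) ^ 2 + 1) + Real.sqrt ((k - w) ^ 2 + 1)
        = Real.sqrt ((|k| + |w|) ^ 2 + 1) + Real.sqrt ((|k| - |w|) ^ 2 + 1) := by
      rcases le_or_gt 0 (k * w) with h | h
      · have hkw' : |k| * |w| = k * w := by rw [← abs_mul]; exact abs_of_nonneg h
        have e1 : (k + w) ^ 2 = (|k| + |w|) ^ 2 := by nlinarith [sq_abs k, sq_abs w]
        have e2 : (k - w) ^ 2 = (|k| - |w|) ^ 2 := by nlinarith [sq_abs k, sq_abs w]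
        rw [e1, e2]
      · have hkw' : |k| * |w| = -(k * w) := by rw [← abs_mul]; exact abs_of_nonpos h.le
        have e1 : (k + w) ^ 2 = (|k| - |w|) ^ 2 := by nlinarith [sq_abs k, sq_abs w]
        have e2 : (k - w) ^ 2 = (|k| + |w|) ^ 2 := by nlinarith [sq_abs k, sq_abs w]
        rw [e1, e2, add_comm]
    rw [hsym, show k ^ 2 = |k| ^ 2 from (sq_abs k).symm]
    set a := |k| with ha
    set b := |w| with hb
    have ha0 : 0 ≤ a := abs_nonneg k
    have h1 : a + b ≤ Real.sqrt ((a + b) ^ 2 + 1) := self_le_sqrt_sq_add_one _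
    have h2 : Real.sqrt ((a - b) ^ 2 + 1) = Real.sqrt ((b - a) ^ 2 + 1) := by
      rw [show (a - b) ^ 2 = (b - a) ^ 2 by ring]
    rw [h2]
    rcases le_or_gt 1 a with hc | hc
    · -- |k| ≥ 1
      have h3 : Real.sqrt (a ^ 2 + 1) < a + 1 / 2 := by
        rw [show a + 1 / 2 = a + 2⁻¹ by norm_num]
        rw [Real.sqrt_lt' (by linarith)]
        nlinarith
      have h4 : (1:ℝ) ≤ Real.sqrt ((b - a) ^ 2 + 1) := by
        have := Real.sqrt_le_sqrt (show (1:ℝ) ≤ (b - a) ^ 2 + 1 by nlinarith)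
        rwa [Real.sqrt_one] at this
      linarith
    · -- |k| < 1
      have h3 : Real.sqrt (a ^ 2 + 1) < 3 / 2 := by
        rw [Real.sqrt_lt' (by norm_num)]
        nlinarith
      have h5 : b - a ≤ Real.sqrt ((b - a) ^ 2 + 1) := self_le_sqrt_sq_add_one _
      linarith
end

section
/- For all k, w ∈ ℝ one has √((k+w)² + 1) + √((k−w)² + 1) − 2·√(k² + 1) ≥ (1/2)·w²/((|k| + |w|)² + 1)^{3/2}. -/
set_option maxHeartbeats 1000000 in
/-- Lower bound for the symmetrized second difference of `f(x) = √(x² + 1)`. -/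
theorem second_difference_lower_bound (k w : ℝ) :
    Real.sqrt ((k + w) ^ 2 + 1) + Real.sqrt ((k - w) ^ 2 + 1) - 2 * Real.sqrt (k ^ 2 + 1)
      ≥ (1 / 2) * w ^ 2 / ((|k| + |w|) ^ 2 + 1) ^ ((3 : ℝ) / 2) := by
  have hM0 : (0:ℝ) < (|k| + |w|) ^ 2 + 1 := by positivity
  set a := Real.sqrt ((k + w) ^ 2 + 1) with ha_def
  set b := Real.sqrt ((k - w) ^ 2 + 1) with hb_def
  set c := Real.sqrt (k ^ 2 + 1) with hc_def
  set m := Real.sqrt ((|k| + |w|) ^ 2 + 1) with hm_def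
  have ha2 : a ^ 2 = (k + w) ^ 2 + 1 := Real.sq_sqrt (by positivity)
  have hb2 : b ^ 2 = (k - w) ^ 2 + 1 := Real.sq_sqrt (by positivity)
  have hc2 : c ^ 2 = k ^ 2 + 1 := Real.sq_sqrt (by positivity)
  have hm2 : m ^ 2 = (|k| + |w|) ^ 2 + 1 := Real.sq_sqrt (by positivity)
  have ha0 : 0 < a := Real.sqrt_pos.mpr (by positivity)
  have hb0 : 0 < b := Real.sqrt_pos.mpr (by positivity)
  have hc0 : 0 < c := Real.sqrt_pos.mpr (by positivity)
  have hm0 : 0 < m := Real.sqrt_pos.mpr hM0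
  have hkw : k * w ≤ |k| * |w| := by
    calc k * w ≤ |k * w| := le_abs_self _
    _ = |k| * |w| := abs_mul k w
  have haM : a ≤ m := by
    apply Real.sqrt_le_sqrt
    have hk := sq_abs k; have hw := sq_abs w
    nlinarith [hkw]
  have hkw' : -(k * w) ≤ |k| * |w| := by
    calc -(k * w) ≤ |k * w| := neg_le_abs _
    _ = |k| * |w| := abs_mul k w
  have hbM : b ≤ m := by
    apply Real.sqrt_le_sqrt
    have hk := sq_abs k; have hw := sq_abs w
    nlinarith [hkw']
  have hcM : c ≤ m := by
    apply Real.sqrt_le_sqrt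
    have hw := sq_abs w
    nlinarith [abs_nonneg k, abs_nonneg w, sq_nonneg (|w|)]
  clear_value a b c m
  -- ab ≥ k² - w² + 1
  have hab4 : (a * b) ^ 2 = (k ^ 2 - w ^ 2 + 1) ^ 2 + 4 * w ^ 2 := by
    have h : (a * b) ^ 2 = ((k + w) ^ 2 + 1) * ((k - w) ^ 2 + 1) := by
      rw [mul_pow, ha2, hb2]
    rw [h]; ring
  have hab : k ^ 2 - w ^ 2 + 1 ≤ a * b := by
    have hsq : (k ^ 2 - w ^ 2 + 1) ^ 2 ≤ (a * b) ^ 2 := by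
      rw [hab4]; nlinarith [sq_nonneg w]
    calc k ^ 2 - w ^ 2 + 1 ≤ |k ^ 2 - w ^ 2 + 1| := le_abs_self _
    _ ≤ a * b := by
        exact le_of_pow_le_pow_left₀ two_ne_zero (mul_pos ha0 hb0).le (by rwa [sq_abs])
  -- the key identity
  have hid : (a + b - 2 * c) * ((a + b + 2 * c) * (a * b + (k ^ 2 + 1)))
      = 2 * w ^ 2 * (a * b + w ^ 2 - k ^ 2 + 3) := by
    linear_combination (a * b + (k ^ 2 + 1) + 2 * b ^ 2) * ha2
      + (2 * ((k + w) ^ 2 + 1) + a * b + (k ^ 2 + 1)) * hb2 + (-4 * (a * b) - 4 * (k ^ 2 + 1)) * hc2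
  have hS : (4:ℝ) ≤ a * b + w ^ 2 - k ^ 2 + 3 := by linarith
  have hDpos : 0 < (a + b + 2 * c) * (a * b + (k ^ 2 + 1)) := by positivity
  have hN0 : 0 ≤ a + b - 2 * c := by
    by_contra hneg
    push_neg at hneg
    have h1 := mul_neg_of_neg_of_pos hneg hDpos
    rw [hid] at h1
    have h2 : 0 ≤ 2 * w ^ 2 * (a * b + w ^ 2 - k ^ 2 + 3) :=
      mul_nonneg (by positivity) (by linarith)
    linarith
  have hD : (a + b + 2 * c) * (a * b + (k ^ 2 + 1)) ≤ 8 * m ^ 3 := by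
    have habm : a * b ≤ m ^ 2 := by nlinarith
    have hCm : k ^ 2 + 1 ≤ m ^ 2 := by nlinarith
    nlinarith [ha0, hb0, hc0, hm0, mul_pos ha0 hb0]
  have hm3 : ((|k| + |w|) ^ 2 + 1) ^ ((3:ℝ) / 2) = m ^ 3 := by
    have h1 : ((|k| + |w|) ^ 2 + 1) ^ ((3:ℝ) / 2)
        = (((|k| + |w|) ^ 2 + 1) ^ ((1:ℝ) / 2)) ^ (3:ℕ) := by
      rw [← Real.rpow_natCast (((|k| + |w|) ^ 2 + 1) ^ ((1:ℝ) / 2)) 3,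
        ← Real.rpow_mul hM0.le]
      norm_num
    rw [h1, ← Real.sqrt_eq_rpow, ← hm_def]
  rw [ge_iff_le, hm3, div_le_iff₀ (by positivity)]
  have h1 : 0 ≤ (a + b - 2 * c) * (8 * m ^ 3 - (a + b + 2 * c) * (a * b + (k ^ 2 + 1))) :=
    mul_nonneg hN0 (by linarith)
  have h2 : 0 ≤ 2 * w ^ 2 * ((a * b + w ^ 2 - k ^ 2 + 3) - 4) :=
    mul_nonneg (by positivity) (by linarith)
  nlinarith [hid, h1, h2, sq_nonneg w]
end

section
/- For all k, w ∈ ℝ with |k| > |w|, one has |2·w·sign(k) − √((k+w)² + 1) + √((k−w)² + 1)|² ≤ 4·w²·min(1, (|k| − |w|)^{−2})/((|k| − |w|)² + 1). -/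
lemma aux_decay (k w : ℝ) (hk : 0 < k) (h : |w| < k) :
    |2 * w - Real.sqrt ((k + w) ^ 2 + 1) + Real.sqrt ((k - w) ^ 2 + 1)| ^ 2
      ≤ 4 * w ^ 2 * min 1 ((k - |w|)⁻¹ ^ 2) / ((k - |w|) ^ 2 + 1) := by
  obtain ⟨hw1, hw2⟩ := abs_lt.mp h
  set a := k - |w| with ha_def
  have ha : 0 < a := by simp only [ha_def, sub_pos]; exact h
  have hu : 0 < k + w := by linarith
  have hv : 0 < k - w := by linarith
  have hau : a ≤ k + w := by have := neg_abs_le w; simp only [ha_def]; linarith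
  have hav : a ≤ k - w := by have := le_abs_self w; simp only [ha_def]; linarith
  set A := Real.sqrt ((k + w) ^ 2 + 1) with hA_def
  set B := Real.sqrt ((k - w) ^ 2 + 1) with hB_def
  set S := Real.sqrt (a ^ 2 + 1) with hS_def
  have hA2 : A ^ 2 = (k + w) ^ 2 + 1 := Real.sq_sqrt (by positivity)
  have hB2 : B ^ 2 = (k - w) ^ 2 + 1 := Real.sq_sqrt (by positivity)
  have hS2 : S ^ 2 = a ^ 2 + 1 := Real.sq_sqrt (by positivity)
  have hA0 : 0 < A := Real.sqrt_pos.mpr (by positivity)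
  have hB0 : 0 < B := Real.sqrt_pos.mpr (by positivity)
  have hS0 : 0 < S := Real.sqrt_pos.mpr (by positivity)
  clear_value A B S a
  have hS1 : 1 ≤ S := by nlinarith [hS2, sq_nonneg a, hS0]
  have hSA : S ≤ A := by
    rw [hS_def, hA_def]; exact Real.sqrt_le_sqrt (by nlinarith)
  have hSB : S ≤ B := by
    rw [hS_def, hB_def]; exact Real.sqrt_le_sqrt (by nlinarith)
  have key1 : (2 * w - A + B) * ((A + (k + w)) * (B + (k - w)))
      = (A + (k + w)) - (B + (k - w)) := by
    linear_combination (A + (k + w)) * hB2 - (B + (k - w)) * hA2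
  have key2 : ((A + (k + w)) - (B + (k - w))) * (A + B) = 2 * w * (A + B + 2 * k) := by
    linear_combination hA2 - hB2
  have keyE : (2 * w - A + B) * ((A + (k + w)) * (B + (k - w)) * (A + B))
      = 2 * w * (A + B + 2 * k) := by
    linear_combination (A + B) * key1 + key2
  have hD : 0 < (A + (k + w)) * (B + (k - w)) * (A + B) := by positivity
  have hABk : 0 < A + B + 2 * k := by linarith
  have habsE : |2 * w - A + B| * ((A + (k + w)) * (B + (k - w)) * (A + B))
      = (2 * |w|) * (A + B + 2 * k) := by
    have := congrArg abs keyE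
    rw [abs_mul, abs_of_pos hD, abs_mul, abs_of_pos hABk, abs_mul, abs_two] at this
    linarith [this]
  have p1 : S + a ≤ A + (k + w) := add_le_add hSA hau
  have p2 : S + a ≤ B + (k - w) := add_le_add hSB hav
  have p3 : 2 * S ≤ A + B := by linarith
  have q1 : 0 ≤ (A + (k + w)) * S * ((B + (k - w)) - (S + a)) :=
    mul_nonneg (mul_nonneg (by positivity) hS0.le) (sub_nonneg.mpr p2)
  have q2 : 0 ≤ (B + (k - w)) * S * ((A + (k + w)) - (S + a)) :=
    mul_nonneg (mul_nonneg (by positivity) hS0.le) (sub_nonneg.mpr p1)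
  have q3 : 0 ≤ (A + (k + w)) * (B + (k - w)) * ((A + B) - 2 * S) :=
    mul_nonneg (mul_nonneg (by positivity) (by positivity)) (sub_nonneg.mpr p3)
  have h2 : (A + B + 2 * k) * (S * (S + a)) ≤ (A + (k + w)) * (B + (k - w)) * (A + B) := by
    linarith [q1, q2, q3]
  have hbound : |2 * w - A + B| ≤ 2 * |w| / (S * (S + a)) := by
    rw [le_div_iff₀ (by positivity)]
    have h3 : |2 * w - A + B| * (S * (S + a)) * ((A + (k + w)) * (B + (k - w)) * (A + B))
        ≤ 2 * |w| * ((A + (k + w)) * (B + (k - w)) * (A + B)) := by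
      calc |2 * w - A + B| * (S * (S + a)) * ((A + (k + w)) * (B + (k - w)) * (A + B))
          = (2 * |w|) * ((A + B + 2 * k) * (S * (S + a))) := by
            linear_combination (S * (S + a)) * habsE
        _ ≤ 2 * |w| * ((A + (k + w)) * (B + (k - w)) * (A + B)) := by
            apply mul_le_mul_of_nonneg_left h2 (by positivity)
    exact le_of_mul_le_mul_right h3 hD
  have hsq : |2 * w - A + B| ^ 2 ≤ (2 * |w| / (S * (S + a))) ^ 2 :=
    pow_le_pow_left₀ (abs_nonneg _) hbound 2
  clear habsE keyE key1 key2 hD q1 q2 q3 h2 hbound hABk p1 p2 p3 hA2 hB2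
  clear hA_def hB_def hS_def hSA hSB hu hv hau hav hw1 hw2 h hA0 hB0 ha_def
  have hSa0 : 0 < S + a := by linarith
  have heq : (2 * |w| / (S * (S + a))) ^ 2 = 4 * w ^ 2 * ((S + a) ^ 2)⁻¹ / (a ^ 2 + 1) := by
    rw [div_pow, mul_pow, sq_abs, mul_pow, hS2]
    field_simp
    ring
  have hm : ((S + a) ^ 2)⁻¹ ≤ min 1 (a⁻¹ ^ 2) := by
    apply le_min
    · rw [inv_le_one_iff₀]
      right
      nlinarith
    · have h1 : a ^ 2 ≤ (S + a) ^ 2 := by nlinarith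
      rw [inv_pow]
      exact inv_anti₀ (by positivity) h1
  calc |2 * w - A + B| ^ 2 ≤ 4 * w ^ 2 * ((S + a) ^ 2)⁻¹ / (a ^ 2 + 1) := heq ▸ hsq
    _ ≤ 4 * w ^ 2 * min 1 (a⁻¹ ^ 2) / (a ^ 2 + 1) := by gcongr

/-- For `|w| < |k|`, quantitative decay of the signed difference. -/
theorem signed_difference_decay (k w : ℝ) (h : |w| < |k|) :
    |2 * w * Real.sign k - Real.sqrt ((k + w) ^ 2 + 1) + Real.sqrt ((k - w) ^ 2 + 1)| ^ 2
      ≤ 4 * w ^ 2 * min 1 ((|k| - |w|)⁻¹ ^ 2) / ((|k| - |w|) ^ 2 + 1) := by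
  rcases lt_trichotomy k 0 with hk | hk | hk
  · rw [Real.sign_of_neg hk, abs_of_neg hk]
    have habs : |(-w)| < -k := by rw [abs_neg]; rw [abs_of_neg hk] at h; exact h
    have := aux_decay (-k) (-w) (by linarith) habs
    have e1 : (-k + -w) ^ 2 = (k + w) ^ 2 := by ring
    have e2 : (-k - -w) ^ 2 = (k - w) ^ 2 := by ring
    rw [e1, e2, abs_neg] at this
    have e3 : 2 * -w - Real.sqrt ((k + w) ^ 2 + 1) + Real.sqrt ((k - w) ^ 2 + 1)
        = 2 * w * (-1) - Real.sqrt ((k + w) ^ 2 + 1) + Real.sqrt ((k - w) ^ 2 + 1) := by ring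
    rw [e3] at this
    have e4 : (-w) ^ 2 = w ^ 2 := by ring
    rw [e4] at this
    exact this
  · subst hk; simp at h; exact absurd h (not_lt.mpr (abs_nonneg w))
  · rw [Real.sign_of_pos hk, abs_of_pos hk, mul_one]
    exact aux_decay k w hk (by rwa [abs_of_pos hk] at h)
end

section
/- Let V̄ ≥ 0, let V : ℝ → ℝ be differentiable with 0 ≤ V(x) ≤ V̄ for all x, and let x, k : ℝ → ℝ be differentiable functions satisfying the Hamiltonian equations x'(t) = k(t) and k'(t) = −V'(x(t)) for all t ∈ ℝ. If k(0)² > 4·V̄, then for all t, s ∈ ℝ one has |k(t) − k(0)| ≤ 2·V̄/|k(0)| and |k(t) − k(s)| ≤ 4·V̄/|k(0)|. -/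
/-- Stability of the momentum along the Hamiltonian flow `H(x,k) = ½k² + V(x)` when the
initial kinetic energy dominates the (nonnegative, bounded) potential. -/
theorem momentum_stability (Vbar : ℝ) (hVbar : 0 ≤ Vbar)
    (V V' : ℝ → ℝ) (hV : ∀ y, HasDerivAt V (V' y) y)
    (hV0 : ∀ y, 0 ≤ V y) (hV1 : ∀ y, V y ≤ Vbar)
    (x k : ℝ → ℝ)
    (hx : ∀ t, HasDerivAt x (k t) t)
    (hk : ∀ t, HasDerivAt k (-(V' (x t))) t)
    (h0 : 4 * Vbar < (k 0) ^ 2) :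
    ∀ t s : ℝ, |k t - k 0| ≤ 2 * Vbar / |k 0| ∧ |k t - k s| ≤ 4 * Vbar / |k 0| := by
  -- energy is constant
  set E : ℝ → ℝ := fun t => k t ^ 2 / 2 + V (x t) with hE
  have hEderiv : ∀ t, HasDerivAt E 0 t := by
    intro t
    have h1 : HasDerivAt (fun t => k t ^ 2 / 2) (k t * (-(V' (x t)))) t := by
      have h : HasDerivAt (fun t => k t ^ 2 / 2) (↑2 * k t ^ (2 - 1) * -V' (x t) / 2) t :=
        ((hk t).pow 2).div_const 2
      convert h using 1; ring
    have h2 : HasDerivAt (fun t => V (x t)) (V' (x t) * k t) t :=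
      (hV (x t)).comp t (hx t)
    have h3 := h1.add h2
    have : HasDerivAt E (k t * (-(V' (x t))) + V' (x t) * k t) t := h3
    convert this using 1; ring
  have hEconst : ∀ t, E t = E 0 := by
    intro t
    have := is_const_of_deriv_eq_zero (f := E)
      (fun u => (hEderiv u).differentiableAt) (fun u => (hEderiv u).deriv) t 0
    exact this
  -- energy bound on k t ^ 2
  have hsq : ∀ t, |k t ^ 2 - k 0 ^ 2| ≤ 2 * Vbar := by
    intro t
    have h := hEconst t
    simp only [hE] at h
    have h1 := hV0 (x t); have h2 := hV1 (x t)
    have h3 := hV0 (x 0); have h4 := hV1 (x 0)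
    rw [abs_le]; constructor <;> nlinarith
  have hlow : ∀ t, 2 * Vbar < k t ^ 2 := by
    intro t
    have := hsq t
    have := abs_le.mp this
    nlinarith
  have hk0 : 0 < |k 0| := by
    have := hlow 0
    have : k 0 ≠ 0 := by intro h; rw [h] at this; nlinarith
    exact abs_pos.mpr this
  have hne : ∀ t, k t ≠ 0 := by
    intro t h
    have := hlow t; rw [h] at this; nlinarith
  -- k has constant sign
  have hcont : Continuous k := continuous_iff_continuousAt.mpr fun t => (hk t).continuousAt
  have hsign : ∀ t, 0 < k t * k 0 := by
    intro t
    rcases lt_or_ge 0 (k t * k 0) with h | h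
    · exact h
    · exfalso
      have h0mem : (0 : ℝ) ∈ Set.uIcc (k t) (k 0) := by
        rw [Set.mem_uIcc]
        rcases mul_nonpos_iff.mp h with ⟨h1, h2⟩ | ⟨h1, h2⟩
        · exact Or.inr ⟨h2, h1⟩
        · exact Or.inl ⟨h1, h2⟩
      obtain ⟨c, _, hc⟩ := intermediate_value_uIcc (hcont.continuousOn (s := Set.uIcc t 0)) h0mem
      exact hne c hc
  -- |k t + k 0| ≥ |k 0|
  have hsum : ∀ t, |k 0| ≤ |k t + k 0| := by
    intro t
    have hs := hsign t
    rcases lt_or_ge 0 (k 0) with h | h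
    · have hkt : 0 < k t := by nlinarith
      rw [abs_of_pos h, abs_of_pos (by linarith)]
      linarith
    · have hk0' : k 0 < 0 := lt_of_le_of_ne h (hne 0)
      have hkt : k t < 0 := by nlinarith
      rw [abs_of_neg hk0', abs_of_neg (by linarith)]
      linarith
  have main : ∀ t, |k t - k 0| ≤ 2 * Vbar / |k 0| := by
    intro t
    rw [le_div_iff₀ hk0]
    calc |k t - k 0| * |k 0| ≤ |k t - k 0| * |k t + k 0| := by
          exact mul_le_mul_of_nonneg_left (hsum t) (abs_nonneg _)
      _ = |k t ^ 2 - k 0 ^ 2| := by rw [← abs_mul]; ring_nf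
      _ ≤ 2 * Vbar := hsq t
  intro t s
  refine ⟨main t, ?_⟩
  have h1 := main t
  have h2 := main s
  have : |k t - k s| ≤ |k t - k 0| + |k s - k 0| := by
    have := abs_sub_le (k t) (k 0) (k s)
    rwa [abs_sub_comm (k 0) (k s)] at this
  have h4 : 2 * Vbar / |k 0| + 2 * Vbar / |k 0| = 4 * Vbar / |k 0| := by ring
  linarith
end
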